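/- The Jucys–Murphy elements J_{i,j}, defined by J_{1,j} = 1 and J_{i+1,j} = σ_{j+i-1} J_{i,j} σ_{j+i-1}, are pairwise commutative: J_{i,j} J_{k,j} = J_{k,j} J_{i,j} for all i, k. -/

import Mathlib

/-- The j-shifted Jucys–Murphy elements: `J_{1,j} = 1`, `J_{i+1,j} = σ_{j+i-1} J_{i,j} σ_{j+i-1}`. -/
def JM {A : Type*} [Ring A] (σ : ℕ → A) : ℕ → ℕ → A
  | 0, _ => 1
  | 1, _ => 1
  | i + 2, j => σ (j + i) * JM σ (i + 1) j * σ (j + i)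

/-- Generators far to the right commute with JM elements. -/
lemma JM_comm_far {A : Type*} [Ring A] (σ : ℕ → A)
    (hcomm : ∀ i j, i + 1 < j → σ i * σ j = σ j * σ i) (j : ℕ) :
    ∀ k m, j + k ≤ m → Commute (σ m) (JM σ k j)
  | 0, m, _ => by simp [JM]
  | 1, m, _ => by simp [JM]
  | i + 2, m, h => by
    have h1 : Commute (σ m) (σ (j + i)) := (hcomm (j + i) m (by omega)).symm
    have h2 := JM_comm_far σ hcomm j (i + 1) m (by omega)
    simp only [JM]
    exact (h1.mul_right h2).mul_right h1

/-- Abstract braid-conjugation commutation lemma. -/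
lemma braid_conj_comm {M : Type*} [Monoid M] {τ s L : M}
    (hb : τ * s * τ = s * τ * s) (hc : L * s = s * L)
    (hih : Commute L (τ * L * τ)) :
    Commute (τ * L * τ) (s * (τ * L * τ) * s) := by
  have hb1 : ∀ x : M, τ * (s * (τ * x)) = s * (τ * (s * x)) := fun x => by
    rw [← mul_assoc, ← mul_assoc, hb, mul_assoc, mul_assoc]
  have hb0 : τ * (s * τ) = s * (τ * s) := by rw [← mul_assoc, hb, mul_assoc]
  have hc1 : ∀ x : M, L * (s * x) = s * (L * x) := fun x => by
    rw [← mul_assoc, hc, mul_assoc]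
  have hih1 : ∀ x : M, τ * (L * (τ * (L * x))) = L * (τ * (L * (τ * x))) := fun x => by
    have := congrArg (· * x) hih.symm.eq
    simpa only [mul_assoc] using this
  show (τ * L * τ) * (s * (τ * L * τ) * s) = (s * (τ * L * τ) * s) * (τ * L * τ)
  simp only [mul_assoc]
  conv_lhs => rw [hb1, hc1, ← hc1 (τ * s), ← hb0, ← hih1 (s * τ), hb1]
  conv_rhs => rw [hb1, hc1, ← hc1 τ]

/-- The Jucys–Murphy elements are pairwise commutative. -/
theorem jucys_murphy_commute
    {A : Type*} [Ring A] [Algebra ℂ A] (q : ℂ) (σ : ℕ → A)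
    (hbraid : ∀ i, σ i * σ (i + 1) * σ i = σ (i + 1) * σ i * σ (i + 1))
    (hcomm : ∀ i j, i + 1 < j → σ i * σ j = σ j * σ i)
    (hquad : ∀ i, (σ i - q • (1 : A)) * (σ i + q⁻¹ • (1 : A)) = 0)
    (j : ℕ) (hj : 1 ≤ j) :
    ∀ i k, JM σ i j * JM σ k j = JM σ k j * JM σ i j := by
  have key : ∀ n, Commute (JM σ (n + 1) j) (JM σ (n + 2) j) := by
    intro n
    induction n with
    | zero => show Commute (JM σ 1 j) _; simp [JM]
    | succ n ih =>
      have hJM3 : JM σ (n + 3) j = σ (j + (n + 1)) * JM σ (n + 2) j * σ (j + (n + 1)) := rfl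
      have hJM2 : JM σ (n + 2) j = σ (j + n) * JM σ (n + 1) j * σ (j + n) := rfl
      rw [hJM3, hJM2]
      have hb : σ (j + n) * σ (j + (n + 1)) * σ (j + n)
          = σ (j + (n + 1)) * σ (j + n) * σ (j + (n + 1)) := by
        have := hbraid (j + n)
        simpa only [add_assoc] using this
      have hc : JM σ (n + 1) j * σ (j + (n + 1)) = σ (j + (n + 1)) * JM σ (n + 1) j :=
        (JM_comm_far σ hcomm j (n + 1) (j + (n + 1)) (by omega)).symm.eq
      have hih : Commute (JM σ (n + 1) j) (σ (j + n) * JM σ (n + 1) j * σ (j + n)) := by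
        rw [← hJM2]; exact ih
      exact braid_conj_comm hb hc hih
  have main : ∀ k i, i ≤ k → Commute (JM σ i j) (JM σ k j) := by
    intro k
    induction k using Nat.strong_induction_on with
    | _ k IH =>
      intro i hik
      match k, hik with
      | 0, hik => interval_cases i; simp [JM]
      | 1, hik => show Commute _ (JM σ 1 j); simp [JM]
      | (m + 2), hik =>
        rcases Nat.lt_or_ge i (m + 1) with hi | hi
        · have c1 : Commute (JM σ i j) (σ (j + m)) :=
            (JM_comm_far σ hcomm j i (j + m) (by omega)).symm
          have c2 : Commute (JM σ i j) (JM σ (m + 1) j) := IH (m + 1) (by omega) i (by omega)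
          show Commute (JM σ i j) (σ (j + m) * JM σ (m + 1) j * σ (j + m))
          exact (c1.mul_right c2).mul_right c1
        · rcases Nat.lt_or_ge i (m + 2) with hi2 | hi2
          · have : i = m + 1 := by omega
            subst this
            exact key m
          · have : i = m + 2 := by omega
            subst this
            exact Commute.refl _
  intro i k
  rcases le_total i k with h | h
  · exact (main k i h).eq
  · exact (main i k h).symm.eq
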